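/- Let K = {0_q} × ℝ^p_− ⊆ ℝ^{q+p} and g(x) = (a₁ᵀx − b₁, …, a_qᵀx − b_q, g_{q+1}(x), …, g_{q+p}(x))ᵀ, where each g_i (i = q+1, …, q+p) is a lower semicontinuous convex function on ℝⁿ. If the implication (a_jᵀw = 0 for all j = 1,…,q and g_i^∞(w) ≤ 0 for all i = q+1,…,q+p ⟹ w = 0) holds, then the set of feasible shifts S = {s ∈ ℝ^{q+p} : ∃ x ∈ ℝⁿ, g(x) + s ∈ K} is closed. -/

import Mathlib

open Set Filter Topology Bornology Metric
open scoped RealInnerProductSpace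

noncomputable section

variable {E : Type*} [NormedAddCommGroup E] [InnerProductSpace ℝ E]
variable {Y : Type*} [NormedAddCommGroup Y] [InnerProductSpace ℝ Y]

/-- The set of feasible shifts `S = {s | ∃ x, g x + s ∈ K}`. -/
def feasShifts (g : E → Y) (K : Set Y) : Set Y := {s | ∃ x, g x + s ∈ K}

/-- The graph of the set-valued mapping `G_K(x) = -g(x) + K`,
i.e. `{(x, y) | g x + y ∈ K}`. -/
def gphGK (g : E → Y) (K : Set Y) : Set (E × Y) := {p | g p.1 + p.2 ∈ K}

/-- Recession cone of a convex set. -/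
def recCone {Z : Type*} [AddCommGroup Z] [Module ℝ Z] (C : Set Z) : Set Z :=
  {d | ∀ z ∈ C, ∀ t : ℝ, 0 ≤ t → z + t • d ∈ C}

/-- Horizon (recession) function of a finite-valued function `f`. -/
def horizonFn (f : E → ℝ) (h : E) : EReal :=
  ⨆ t : {t : ℝ // 0 < t}, (((f ((t : ℝ) • h) - f 0) / (t : ℝ) : ℝ) : EReal)

/-- The optimal value function `ν(s) = inf {f x : g x + s ∈ K}` of the shifted problem. -/
def valFn (f : E → ℝ) (g : E → Y) (K : Set Y) (s : Y) : EReal :=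
  sInf ((fun x => (f x : EReal)) '' {x | g x + s ∈ K})

/-- The solution set `X(s)` of the shifted problem. -/
def solSet (f : E → ℝ) (g : E → Y) (K : Set Y) (s : Y) : Set E :=
  {x | g x + s ∈ K ∧ ∀ x', g x' + s ∈ K → f x ≤ f x'}

/-- The Lagrangian `l(x,y,λ) = f x + ⟨λ, g x - y⟩`. -/
def lagr (f : E → ℝ) (g : E → Y) (x : E) (y : Y) (l : Y) : ℝ :=
  f x + ⟪l, g x - y⟫

/-- The augmented Lagrangian `l_r(x,y,λ) = f x + ⟨λ, g x - y⟩ + (r/2)‖g x - y‖²`. -/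
def auglagr (f : E → ℝ) (g : E → Y) (r : ℝ) (x : E) (y : Y) (l : Y) : ℝ :=
  f x + ⟪l, g x - y⟫ + r / 2 * ‖g x - y‖ ^ 2

/-- The dual function `θ(λ) = - inf {l(x,y,λ) : x ∈ ℝⁿ, y ∈ K}`. -/
def dualFn (f : E → ℝ) (g : E → Y) (K : Set Y) (l : Y) : EReal :=
  - sInf ((fun p : E × Y => ((lagr f g p.1 p.2 l : ℝ) : EReal)) '' {p | p.2 ∈ K})

/-- Fenchel conjugate of an extended-real-valued function. -/
def econj (h : Y → EReal) (l : Y) : EReal := ⨆ s : Y, (⟪l, s⟫ : EReal) - h s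

/-- Convex subdifferential of an extended-real-valued function. -/
def esubdiff (h : Y → EReal) (s : Y) : Set Y :=
  {l | ∀ s', h s + (⟪l, s' - s⟫ : EReal) ≤ h s'}

/-- Convexity of an extended-real-valued function, via its epigraph. -/
def ERealConvexOn (h : Y → EReal) : Prop :=
  Convex ℝ {p : Y × ℝ | h p.1 ≤ (p.2 : EReal)}

/-- Properness of an extended-real-valued function. -/
def ERealProper (h : Y → EReal) : Prop := (∀ s, h s ≠ ⊥) ∧ ∃ s, h s ≠ ⊤

/-- The optimal value `val(D(s)) = sup_λ [⟨s,λ⟩ - θ(λ)]` of the dual problem `D(s)`. -/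
def dualVal (f : E → ℝ) (g : E → Y) (K : Set Y) (s : Y) : EReal :=
  ⨆ l : Y, (⟪s, l⟫ : EReal) - dualFn f g K l

/-- The solution set `Sol(D(s))` of the dual problem `D(s)`. -/
def dualSol (f : E → ℝ) (g : E → Y) (K : Set Y) (s : Y) : Set Y :=
  {l | ∀ l', (⟪s, l'⟫ : EReal) - dualFn f g K l' ≤ (⟪s, l⟫ : EReal) - dualFn f g K l}

/-- The set of proximal points `argmin_{λ'} [h(λ') + ‖λ' - λ‖²/(2r)]`. -/
def proxSet (h : Y → EReal) (r : ℝ) (l : Y) : Set Y :=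
  {m | ∀ m', h m + ((‖m - l‖ ^ 2 / (2 * r) : ℝ) : EReal) ≤
      h m' + ((‖m' - l‖ ^ 2 / (2 * r) : ℝ) : EReal)}

/-- The Moreau–Yosida regularization `h_r(λ) = inf_{λ'} [h(λ') + ‖λ' - λ‖²/(2r)]`. -/
def moreau (h : Y → EReal) (r : ℝ) (l : Y) : EReal :=
  ⨅ m : Y, (h m + ((‖m - l‖ ^ 2 / (2 * r) : ℝ) : EReal))

set_option maxHeartbeats 1000000 in
/-- Corollary 2.1: closedness of the set of feasible shifts for
`K = {0_q} × ℝ^p₋` with affine equality constraints and convex inequality constraints. -/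
theorem feasShifts_isClosed_affine_convex {n q p : ℕ}
    (a : Fin q → EuclideanSpace ℝ (Fin n)) (b : Fin q → ℝ)
    (gi : Fin p → EuclideanSpace ℝ (Fin n) → ℝ)
    (hconv : ∀ i, ConvexOn ℝ Set.univ (gi i))
    (hlsc : ∀ i, LowerSemicontinuous (gi i))
    (hcond : ∀ w : EuclideanSpace ℝ (Fin n),
      (∀ j, ⟪a j, w⟫ = 0) → (∀ i, horizonFn (gi i) w ≤ (0 : EReal)) → w = 0) :
    IsClosed {s : (Fin q → ℝ) × (Fin p → ℝ) |
      ∃ x, (∀ j, ⟪a j, x⟫ - b j + s.1 j = 0) ∧ (∀ i, gi i x + s.2 i ≤ 0)} := by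

  apply IsSeqClosed.isClosed
  intro s slim hs hlim
  choose x hx1 hx2 using hs
  have hfst : Tendsto (fun k => (s k).1) atTop (𝓝 slim.1) :=
    (continuous_fst.tendsto slim).comp hlim
  have hsnd : Tendsto (fun k => (s k).2) atTop (𝓝 slim.2) :=
    (continuous_snd.tendsto slim).comp hlim
  have hs1 : ∀ j, Tendsto (fun k => (s k).1 j) atTop (𝓝 (slim.1 j)) :=
    fun j => tendsto_pi_nhds.mp hfst j
  have hs2 : ∀ i, Tendsto (fun k => (s k).2 i) atTop (𝓝 (slim.2 i)) :=
    fun i => tendsto_pi_nhds.mp hsnd i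
  by_cases hb : ∀ m : ℕ, ∃ᶠ k in atTop, (m : ℝ) < ‖x k‖
  · exfalso
    obtain ⟨φ, hφmono, hφ⟩ := Filter.extraction_forall_of_frequently hb
    have hrpos : ∀ m, (0:ℝ) < ‖x (φ m)‖ :=
      fun m => lt_of_le_of_lt (Nat.cast_nonneg m) (hφ m)
    have hrtop : Tendsto (fun m => ‖x (φ m)‖) atTop atTop :=
      tendsto_atTop_mono (fun m => (hφ m).le) tendsto_natCast_atTop_atTop
    set u : ℕ → EuclideanSpace ℝ (Fin n) := fun m => (‖x (φ m)‖)⁻¹ • x (φ m) with hu_def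
    have humem : ∀ m, u m ∈ sphere (0 : EuclideanSpace ℝ (Fin n)) 1 := by
      intro m
      rw [mem_sphere_zero_iff_norm, hu_def, norm_smul, norm_inv, norm_norm]
      exact inv_mul_cancel₀ (hrpos m).ne'
    obtain ⟨w, hwmem, ψ, hψmono, hψ⟩ :=
      (isCompact_sphere (0 : EuclideanSpace ℝ (Fin n)) 1).tendsto_subseq humem
    have hσtop : Tendsto (fun m => φ (ψ m)) atTop atTop :=
      (hφmono.comp hψmono).tendsto_atTop
    have hrψtop : Tendsto (fun m => ‖x (φ (ψ m))‖) atTop atTop :=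
      hrtop.comp hψmono.tendsto_atTop
    have hA : ∀ j, ⟪a j, w⟫ = 0 := by
      intro j
      have h1 : Tendsto (fun m => ⟪a j, u (ψ m)⟫) atTop (𝓝 ⟪a j, w⟫) :=
        Tendsto.inner tendsto_const_nhds hψ
      have h2 : ∀ m, ⟪a j, u (ψ m)⟫ = (b j - (s (φ (ψ m))).1 j) / ‖x (φ (ψ m))‖ := by
        intro m
        have h := hx1 (φ (ψ m)) j
        have hx : ⟪a j, x (φ (ψ m))⟫ = b j - (s (φ (ψ m))).1 j := by linarith
        simp only [hu_def]
        rw [real_inner_smul_right, hx, div_eq_inv_mul]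
      have h3 : Tendsto (fun m => (b j - (s (φ (ψ m))).1 j) / ‖x (φ (ψ m))‖) atTop (𝓝 0) :=
        Tendsto.div_atTop (tendsto_const_nhds.sub ((hs1 j).comp hσtop)) hrψtop
      exact tendsto_nhds_unique (h1.congr h2) h3
    have hH : ∀ i, horizonFn (gi i) w ≤ (0 : EReal) := by
      intro i
      rw [horizonFn]
      apply iSup_le
      rintro ⟨t, ht⟩
      have key : gi i (t • w) ≤ gi i 0 := by
        by_contra hkey
        push_neg at hkey
        set c := (gi i 0 + gi i (t • w)) / 2 with hc
        have hc1 : gi i 0 < c := by rw [hc]; linarith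
        have hc2 : c < gi i (t • w) := by rw [hc]; linarith
        have hz : Tendsto (fun m => t • u (ψ m)) atTop (𝓝 (t • w)) := hψ.const_smul t
        have hev1 : ∀ᶠ m in atTop, c < gi i (t • u (ψ m)) :=
          hz.eventually (hlsc i (t • w) c hc2)
        have hev2 : ∀ᶠ m in atTop, t / ‖x (φ (ψ m))‖ ≤ 1 := by
          filter_upwards [hrψtop.eventually_ge_atTop t] with m hm
          exact (div_le_one (hrpos (ψ m))).mpr hm
        have hub : ∀ m, t / ‖x (φ (ψ m))‖ ≤ 1 → gi i (t • u (ψ m)) ≤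
            (1 - t / ‖x (φ (ψ m))‖) * gi i 0 +
              (t / ‖x (φ (ψ m))‖) * (-(s (φ (ψ m))).2 i) := by
          intro m hm1
          set lam := t / ‖x (φ (ψ m))‖ with hlam
          have hlam0 : 0 ≤ lam := div_nonneg ht.le (hrpos (ψ m)).le
          have hxz : t • u (ψ m) = (1 - lam) • (0 : EuclideanSpace ℝ (Fin n)) +
              lam • x (φ (ψ m)) := by
            rw [smul_zero, zero_add, hlam, div_eq_mul_inv, ← smul_smul]
          have hcx : gi i ((1 - lam) • (0 : EuclideanSpace ℝ (Fin n)) + lam • x (φ (ψ m))) ≤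
              (1 - lam) * gi i 0 + lam * gi i (x (φ (ψ m))) :=
            (hconv i).2 (mem_univ (0 : EuclideanSpace ℝ (Fin n)))
              (mem_univ (x (φ (ψ m)))) (by linarith) hlam0 (by ring)
          rw [hxz]
          refine le_trans hcx ?_
          have h2 := hx2 (φ (ψ m)) i
          have hgx : gi i (x (φ (ψ m))) ≤ -(s (φ (ψ m))).2 i := by linarith
          have := mul_le_mul_of_nonneg_left hgx hlam0
          linarith
        have hrhs : Tendsto (fun m => (1 - t / ‖x (φ (ψ m))‖) * gi i 0 +
            (t / ‖x (φ (ψ m))‖) * (-(s (φ (ψ m))).2 i)) atTop (𝓝 (gi i 0)) := by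
          have hl0 : Tendsto (fun m => t / ‖x (φ (ψ m))‖) atTop (𝓝 0) :=
            Tendsto.div_atTop tendsto_const_nhds hrψtop
          have hnum : Tendsto (fun m => 1 - t / ‖x (φ (ψ m))‖) atTop (𝓝 1) := by
            simpa using tendsto_const_nhds.sub hl0
          have hgs : Tendsto (fun m => -(s (φ (ψ m))).2 i) atTop (𝓝 (-slim.2 i)) :=
            ((hs2 i).comp hσtop).neg
          have htot : Tendsto (fun m => (1 - t / ‖x (φ (ψ m))‖) * gi i 0 +
              (t / ‖x (φ (ψ m))‖) * (-(s (φ (ψ m))).2 i)) atTop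
              (𝓝 (1 * gi i 0 + 0 * (-slim.2 i))) :=
            (hnum.mul tendsto_const_nhds).add (hl0.mul hgs)
          simpa using htot
        have hev3 : ∀ᶠ m in atTop, (1 - t / ‖x (φ (ψ m))‖) * gi i 0 +
            (t / ‖x (φ (ψ m))‖) * (-(s (φ (ψ m))).2 i) < c :=
          hrhs.eventually_lt_const hc1
        obtain ⟨m, hm1, hm2, hm3⟩ := (hev1.and (hev2.and hev3)).exists
        have := hub m hm2
        linarith
      have hq : (gi i ((t : ℝ) • w) - gi i 0) / (t : ℝ) ≤ 0 :=
        div_nonpos_iff.mpr (Or.inr ⟨by simpa using sub_nonpos.mpr key, ht.le⟩)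
      exact EReal.coe_nonpos.mpr hq
    have hw0 := hcond w hA hH
    rw [mem_sphere_zero_iff_norm, hw0, norm_zero] at hwmem
    norm_num at hwmem
  · push_neg at hb
    obtain ⟨m, hm⟩ := hb
    obtain ⟨N, hN⟩ := Filter.eventually_atTop.mp hm
    set y : ℕ → EuclideanSpace ℝ (Fin n) := fun k => x (k + N) with hy
    have hmem : ∀ k, y k ∈ closedBall (0 : EuclideanSpace ℝ (Fin n)) (m : ℝ) := by
      intro k
      rw [mem_closedBall_zero_iff]
      exact hN (k + N) (Nat.le_add_left N k)
    obtain ⟨xb, _, φ, hφmono, hφ⟩ :=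
      (isCompact_closedBall (0 : EuclideanSpace ℝ (Fin n)) (m : ℝ)).tendsto_subseq hmem
    have hφ' : Tendsto (fun k => x (φ k + N)) atTop (𝓝 xb) := hφ
    have hσ : Tendsto (fun k => φ k + N) atTop atTop :=
      tendsto_atTop_mono (fun k => le_trans (hφmono.id_le k) (Nat.le_add_right _ N))
        tendsto_id
    refine ⟨xb, fun j => ?_, fun i => ?_⟩
    · have h1 : Tendsto (fun k => ⟪a j, x (φ k + N)⟫ - b j + (s (φ k + N)).1 j) atTop
          (𝓝 (⟪a j, xb⟫ - b j + slim.1 j)) :=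
        ((Tendsto.inner tendsto_const_nhds hφ').sub tendsto_const_nhds).add
          ((hs1 j).comp hσ)
      have h2 : (fun k => ⟪a j, x (φ k + N)⟫ - b j + (s (φ k + N)).1 j) =
          (fun _ => (0 : ℝ)) := funext fun k => hx1 (φ k + N) j
      rw [h2] at h1
      exact tendsto_nhds_unique h1 tendsto_const_nhds
    · by_contra hcon
      push_neg at hcon
      have hlt : -slim.2 i < gi i xb := by linarith
      set c := (gi i xb + -slim.2 i) / 2 with hc
      have hc1 : -slim.2 i < c := by rw [hc]; linarith
      have hc2 : c < gi i xb := by rw [hc]; linarith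
      have hev1 : ∀ᶠ k in atTop, c < gi i (x (φ k + N)) :=
        hφ'.eventually (hlsc i xb c hc2)
      have h3 : Tendsto (fun k => -(s (φ k + N)).2 i) atTop (𝓝 (-slim.2 i)) :=
        ((hs2 i).comp hσ).neg
      have hev2 : ∀ᶠ k in atTop, -(s (φ k + N)).2 i < c := h3.eventually_lt_const hc1
      obtain ⟨k, hk1, hk2⟩ := (hev1.and hev2).exists
      have := hx2 (φ k + N) i
      linarith
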